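/- For every n ≥ 2, the sum over all b with 0 ≤ b < 2^n of the integers (2^n * T^[n](b) − 3^(m(b,n)) * b) equals n * 2^(2n−2). -/
import Mathlib


def T (N : ℕ) : ℕ := if N % 2 = 0 then N / 2 else (3 * N + 1) / 2

def m (b n : ℕ) : ℕ := ((Finset.range n).filter (fun k => Odd (T^[k] b))).card

lemma T_even {x : ℕ} (h : x % 2 = 0) : T x = x / 2 := if_pos h

lemma T_odd {x : ℕ} (h : x % 2 = 1) : T x = (3 * x + 1) / 2 := by
  unfold T; rw [if_neg (by omega)]

lemma m_zero (b : ℕ) : m b 0 = 0 := by simp [m]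

lemma m_succ (b n : ℕ) : m b (n + 1) = m b n + T^[n] b % 2 := by
  unfold m
  rw [Finset.range_add_one, Finset.filter_insert]
  by_cases h : Odd (T^[n] b)
  · rw [if_pos h, Finset.card_insert_of_notMem (by simp)]
    rw [Nat.odd_iff] at h; omega
  · rw [if_neg h]
    rw [Nat.odd_iff] at h; omega

lemma shift (n : ℕ) : ∀ k ≤ n, ∀ b j,
    T^[k] (b + j * 2 ^ n) = T^[k] b + j * 2 ^ (n - k) * 3 ^ (m b k) := by
  intro k
  induction k with
  | zero => intro _ b j; simp [m_zero]
  | succ k ih =>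
    intro hk b j
    rw [Function.iterate_succ_apply', Function.iterate_succ_apply', ih (by omega) b j]
    have hm : m b (k + 1) = m b k + T^[k] b % 2 := m_succ b k
    have h2 : (2 : ℕ) ^ (n - k) = 2 * 2 ^ (n - (k + 1)) := by
      rw [← pow_succ']; congr 1; omega
    set x := T^[k] b with hxdef
    set A := j * 2 ^ (n - (k + 1)) * 3 ^ (m b k) with hA
    have hE : j * 2 ^ (n - k) * 3 ^ (m b k) = 2 * A := by rw [h2, hA]; ring
    rw [hE]
    rcases Nat.even_or_odd x with hx | hx
    · have hx' : x % 2 = 0 := Nat.even_iff.mp hx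
      rw [T_even (by omega), T_even hx', hm, hx']
      have : j * 2 ^ (n - (k + 1)) * 3 ^ (m b k + 0) = A := by rw [hA]; ring_nf
      rw [this]; omega
    · have hx' : x % 2 = 1 := Nat.odd_iff.mp hx
      rw [T_odd (by omega), T_odd hx', hm, hx']
      have : j * 2 ^ (n - (k + 1)) * 3 ^ (m b k + 1) = 3 * A := by rw [hA, pow_succ]; ring
      rw [this]; omega

lemma m_shift (n b : ℕ) : m (b + 2 ^ n) n = m b n := by
  unfold m
  congr 1
  apply Finset.filter_congr
  intro k hk
  rw [Finset.mem_range] at hk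
  have hs := shift n k (by omega) b 1
  rw [one_mul] at hs
  rw [hs]
  have h2 : (2 : ℕ) ^ (n - k) = 2 * 2 ^ (n - k - 1) := by
    rw [← pow_succ']; congr 1; omega
  have : 1 * (2 ^ (n - k)) * 3 ^ (m b k) = 2 * (2 ^ (n - k - 1) * 3 ^ (m b k)) := by
    rw [h2]; ring
  rw [this]
  generalize (2 ^ (n - k - 1) * 3 ^ (m b k) : ℕ) = B
  simp only [Nat.odd_iff]
  omega

lemma pair (n b : ℕ) :
    ((2 ^ (n + 1) * T^[n + 1] b : ℤ) - 3 ^ m b (n + 1) * b)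
      + ((2 ^ (n + 1) * T^[n + 1] (b + 2 ^ n) : ℤ) - 3 ^ m (b + 2 ^ n) (n + 1) * (b + 2 ^ n))
    = 4 * ((2 ^ n * T^[n] b : ℤ) - 3 ^ m b n * b) + 2 ^ n := by
  have hs : T^[n] (b + 2 ^ n) = T^[n] b + 3 ^ (m b n) := by
    have := shift n n le_rfl b 1; simpa using this
  have hms : m (b + 2 ^ n) n = m b n := m_shift n b
  have hodd3 : (3 : ℕ) ^ (m b n) % 2 = 1 := Nat.odd_iff.mp (Odd.pow (by decide))
  set x := T^[n] b with hxdef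
  rw [Function.iterate_succ_apply', Function.iterate_succ_apply', hs, m_succ, m_succ, hs, hms,
    ← hxdef]
  rcases Nat.even_or_odd x with hx | hx
  · have hx' : x % 2 = 0 := Nat.even_iff.mp hx
    have hx2 : (x + 3 ^ (m b n)) % 2 = 1 := by omega
    have e1 : T x = x / 2 := T_even hx'
    have e2 : 2 * T x = x := by rw [e1]; omega
    have e3 : 2 * T (x + 3 ^ (m b n)) = 3 * (x + 3 ^ (m b n)) + 1 := by
      rw [T_odd hx2]; omega
    have c2 : (2 * T x : ℤ) = x := by exact_mod_cast congrArg (Nat.cast : ℕ → ℤ) e2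
    have c3 : (2 * T (x + 3 ^ (m b n)) : ℤ) = 3 * (x + 3 ^ (m b n)) + 1 := by
      exact_mod_cast congrArg (Nat.cast : ℕ → ℤ) e3
    rw [hx', hx2]
    push_cast
    rw [show ((2:ℤ) ^ (n+1) * T x) = 2 ^ n * (2 * T x) by ring, c2,
      show ((2:ℤ) ^ (n+1) * T (x + 3 ^ (m b n))) = 2 ^ n * (2 * T (x + 3 ^ (m b n))) by ring, c3]
    ring
  · have hx' : x % 2 = 1 := Nat.odd_iff.mp hx
    have hx2 : (x + 3 ^ (m b n)) % 2 = 0 := by omega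
    have e2 : 2 * T x = 3 * x + 1 := by rw [T_odd hx']; omega
    have e3 : 2 * T (x + 3 ^ (m b n)) = x + 3 ^ (m b n) := by rw [T_even hx2]; omega
    have c2 : (2 * T x : ℤ) = 3 * x + 1 := by exact_mod_cast congrArg (Nat.cast : ℕ → ℤ) e2
    have c3 : (2 * T (x + 3 ^ (m b n)) : ℤ) = x + 3 ^ (m b n) := by
      exact_mod_cast congrArg (Nat.cast : ℕ → ℤ) e3
    rw [hx', hx2]
    push_cast
    rw [show ((2:ℤ) ^ (n+1) * T x) = 2 ^ n * (2 * T x) by ring, c2,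
      show ((2:ℤ) ^ (n+1) * T (x + 3 ^ (m b n))) = 2 ^ n * (2 * T (x + 3 ^ (m b n))) by ring, c3]
    ring

lemma key : ∀ n : ℕ,
    4 * ∑ b ∈ Finset.range (2 ^ n), ((2 ^ n * T^[n] b : ℤ) - 3 ^ m b n * b)
      = n * 4 ^ n := by
  intro n
  induction n with
  | zero => simp [m_zero]
  | succ n ih =>
    have hsplit : (2 : ℕ) ^ (n + 1) = 2 ^ n + 2 ^ n := by ring
    rw [hsplit, Finset.sum_range_add]
    have : ∀ i ∈ Finset.range (2 ^ n),
        (2 ^ (n + 1) * (T^[n + 1] i : ℤ) - 3 ^ m i (n + 1) * (i : ℤ) +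
          (2 ^ (n + 1) * ((T^[n + 1] (2 ^ n + i) : ℕ) : ℤ) -
            3 ^ m (2 ^ n + i) (n + 1) * ((2 ^ n + i : ℕ) : ℤ)))
        = 4 * ((2 ^ n * T^[n] i : ℤ) - 3 ^ m i n * i) + 2 ^ n := by
      intro i _
      have hp := pair n i
      rw [add_comm (2 ^ n) i]
      push_cast at hp ⊢
      linarith [hp]
    rw [← Finset.sum_add_distrib, Finset.sum_congr rfl this, Finset.sum_add_distrib,
      Finset.sum_const, Finset.card_range, ← Finset.mul_sum]
    rw [nsmul_eq_mul]
    have h2 : ((2:ℤ) ^ n) * 2 ^ n = 4 ^ n := by rw [← mul_pow]; norm_num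
    push_cast
    linear_combination 4 * ih + 4 * h2

theorem stmt8 : ∀ n ≥ 2,
    ∑ b ∈ Finset.range (2 ^ n), ((2 ^ n * T^[n] b : ℤ) - 3 ^ m b n * b) = n * 2 ^ (2 * n - 2) := by
  intro n hn
  have h := key n
  have h4 : (4 : ℤ) ^ n = 4 * 2 ^ (2 * n - 2) := by
    have e1 : (4 : ℤ) ^ n = 2 ^ (2 * n) := by
      rw [show (4:ℤ) = 2 ^ 2 by norm_num, ← pow_mul]
    have e2 : (2 : ℤ) ^ (2 * n) = 2 ^ (2 * n - 2) * 2 ^ 2 := by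
      rw [← pow_add]; congr 1; omega
    rw [e1, e2]; ring
  rw [h4] at h
  have : 4 * ∑ b ∈ Finset.range (2 ^ n), ((2 ^ n * T^[n] b : ℤ) - 3 ^ m b n * b)
      = 4 * (n * 2 ^ (2 * n - 2)) := by rw [h]; ring
  exact mul_left_cancel₀ (by norm_num) this
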